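/- Let e_1, …, e_6 be the canonical basis of 𝔽_2^6 and let S = {0, e_1, e_2, e_3, e_4, e_5, e_6, e_1+e_2+e_3+e_4+e_5+e_6}. Then S consists of eight pairwise distinct vectors whose sum is zero, yet S is not the disjoint union of two affine planes of 𝔽_2^6 (cosets of 2-dimensional linear subspaces). -/

import Mathlib

private def pf : Fin 8 → (Fin 6 → ZMod 2)
  | 0 => 0
  | 1 => Pi.single 0 1
  | 2 => Pi.single 1 1
  | 3 => Pi.single 2 1
  | 4 => Pi.single 3 1
  | 5 => Pi.single 4 1
  | 6 => Pi.single 5 1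
  | 7 => ∑ i : Fin 6, Pi.single i 1

set_option maxRecDepth 10000 in
private lemma pf_key : ∀ i j k l : Fin 8, i ≠ j → i ≠ k → i ≠ l → j ≠ k → j ≠ l → k ≠ l →
    pf i + pf j + pf k + pf l ≠ 0 := by decide

set_option maxRecDepth 10000 in
private lemma pf_surj : ∀ x ∈ (insert (0 : Fin 6 → ZMod 2)
      (insert (∑ i : Fin 6, (Pi.single i 1 : Fin 6 → ZMod 2))
        (Finset.univ.image fun i : Fin 6 => (Pi.single i 1 : Fin 6 → ZMod 2)))),
    ∃ i : Fin 8, pf i = x := by decide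

theorem stmt_16
    (S : Finset (Fin 6 → ZMod 2))
    (hS : S = insert (0 : Fin 6 → ZMod 2)
      (insert (∑ i : Fin 6, (Pi.single i 1 : Fin 6 → ZMod 2))
        (Finset.univ.image fun i : Fin 6 => (Pi.single i 1 : Fin 6 → ZMod 2)))) :
    S.card = 8 ∧ (∑ x ∈ S, x) = 0 ∧
    ¬ ∃ (W W' : Submodule (ZMod 2) (Fin 6 → ZMod 2)) (a a' : Fin 6 → ZMod 2),
      Module.finrank (ZMod 2) W = 2 ∧ Module.finrank (ZMod 2) W' = 2 ∧
      (S : Set (Fin 6 → ZMod 2)) =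
        ((a + ·) '' (W : Set (Fin 6 → ZMod 2))) ∪
          ((a' + ·) '' (W' : Set (Fin 6 → ZMod 2))) ∧
      Disjoint ((a + ·) '' (W : Set (Fin 6 → ZMod 2)))
        ((a' + ·) '' (W' : Set (Fin 6 → ZMod 2))) := by
  subst hS
  refine ⟨by decide, by decide, ?_⟩
  rintro ⟨W, W', a, a', hW, hW', hunion, hdisj⟩
  -- every x : Fin 6 → ZMod 2 satisfies x + x = 0
  have h2 : ∀ x : Fin 6 → ZMod 2, x + x = 0 := by
    intro x
    rw [← two_smul (ZMod 2) x, show (2 : ZMod 2) = 0 by decide, zero_smul]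
  -- a basis of W
  have b : Module.Basis (Fin 2) (ZMod 2) W := Module.finBasisOfFinrankEq (ZMod 2) W hW
  set u : Fin 6 → ZMod 2 := ((b 0 : W) : Fin 6 → ZMod 2) with hu
  set v : Fin 6 → ZMod 2 := ((b 1 : W) : Fin 6 → ZMod 2) with hv
  have hu0 : u ≠ 0 := by
    simpa [hu, Submodule.coe_eq_zero] using b.ne_zero 0
  have hv0 : v ≠ 0 := by
    simpa [hv, Submodule.coe_eq_zero] using b.ne_zero 1
  have huv : u ≠ v := by
    intro h
    exact (b.injective.ne (by decide : (0 : Fin 2) ≠ 1)) (Subtype.coe_injective h)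
  have huv0 : u + v ≠ 0 := by
    intro h
    apply huv
    have := congrArg (· + v) h
    simpa [add_assoc, h2 v] using this
  -- the four points of the coset a + W are in S
  have hmem : ∀ w ∈ W, ∃ i : Fin 8, pf i = a + w := by
    intro w hw
    have hx : a + w ∈ ((a + ·) '' (W : Set (Fin 6 → ZMod 2)) ∪
        (a' + ·) '' (W' : Set (Fin 6 → ZMod 2))) := Set.mem_union_left _ ⟨w, hw, rfl⟩
    rw [← hunion] at hx
    exact pf_surj _ (Finset.mem_coe.mp hx)
  obtain ⟨i, hi⟩ := hmem 0 W.zero_mem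
  obtain ⟨j, hj⟩ := hmem u (b 0).2
  obtain ⟨k, hk⟩ := hmem v (b 1).2
  obtain ⟨l, hl⟩ := hmem (u + v) (W.add_mem (b 0).2 (b 1).2)
  rw [add_zero] at hi
  -- distinctness of indices
  have cancel : ∀ x y : Fin 6 → ZMod 2, a + x = a + y → x = y := fun x y h =>
    add_left_cancel h
  have hij : i ≠ j := fun h =>
    hu0 (cancel 0 u (by rw [add_zero, ← hj, ← h, hi])).symm
  have hik : i ≠ k := fun h =>
    hv0 (cancel 0 v (by rw [add_zero, ← hk, ← h, hi])).symm
  have hil : i ≠ l := fun h =>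
    huv0 (cancel 0 (u + v) (by rw [add_zero, ← hl, ← h, hi])).symm
  have hjk : j ≠ k := fun h => huv (cancel u v (by rw [← hj, ← hk, h]))
  have hjl : j ≠ l := fun h => by
    have h3 := cancel u (u + v) (by rw [← hj, ← hl, h])
    exact hv0 (add_left_cancel (show u + 0 = u + v by rw [add_zero]; exact h3)).symm
  have hkl : k ≠ l := fun h => by
    have h3 := cancel v (u + v) (by rw [← hk, ← hl, h])
    exact hu0 (add_right_cancel (show (0 : Fin 6 → ZMod 2) + v = u + v by
      rw [zero_add]; exact h3)).symm
  -- the four points sum to zero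
  apply pf_key i j k l hij hik hil hjk hjl hkl
  rw [hi, hj, hk, hl]
  have : a + (a + u) + (a + v) + (a + (u + v)) =
      (a + a) + (a + a) + ((u + u) + (v + v)) := by abel
  rw [this, h2, h2, h2, h2]
  simp
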